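/- For every integer k ≥ 1 and every real λ > 0, the mean of the Poisson distribution of order k is μ(k,λ) = Σ_{m=0}^∞ m · P_m(k,λ) = k(k+1)λ/2. -/

import Mathlib

open scoped BigOperators

/-- Probability mass function of the Poisson distribution of order `k` with rate `lam`:
`P_n(k,λ) = e^{-kλ} · Σ_{n₁+2n₂+⋯+k·n_k = n} ∏_{j=1}^k λ^{n_j}/n_j!`. -/
noncomputable def poissonK (k : ℕ) (lam : ℝ) (n : ℕ) : ℝ :=
  Real.exp (-(k * lam)) *
    ∑ f ∈ Finset.filter (fun f : Fin k → ℕ => ∑ j : Fin k, (j.1 + 1) * f j = n)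
        (Fintype.piFinset fun _ : Fin k => Finset.range (n + 1)),
      ∏ j : Fin k, lam ^ f j / (Nat.factorial (f j) : ℝ)

lemma hasSum_exp_div (x : ℝ) :
    HasSum (fun n : ℕ => x ^ n / (Nat.factorial n : ℝ)) (Real.exp x) := by
  have h := (NormedSpace.expSeries_div_summable x).hasSum
  have hx : (∑' n : ℕ, x ^ n / (Nat.factorial n : ℝ)) = Real.exp x := by
    rw [Real.exp_eq_exp_ℝ, NormedSpace.exp_eq_tsum_div]
  rwa [hx] at h

lemma hasSum_mul_exp_div (x : ℝ) :
    HasSum (fun n : ℕ => (n : ℝ) * (x ^ n / (Nat.factorial n : ℝ))) (x * Real.exp x) := by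
  have h := (hasSum_exp_div x).mul_left x
  have h2 : HasSum (fun n : ℕ =>
      (((n + 1 : ℕ) : ℝ)) * (x ^ (n + 1) / (Nat.factorial (n + 1) : ℝ))) (x * Real.exp x) := by
    refine h.congr_fun fun n => ?_
    rw [Nat.factorial_succ]
    have hn : (Nat.factorial n : ℝ) ≠ 0 := Nat.cast_ne_zero.2 (Nat.factorial_ne_zero n)
    push_cast
    field_simp
    ring
  have := (hasSum_nat_add_iff
    (f := fun n : ℕ => (n : ℝ) * (x ^ n / (Nat.factorial n : ℝ))) 1).1 h2
  simpa using this

lemma hasSum_pi_prod : ∀ {n : ℕ} (a : Fin n → ℕ → ℝ) (s : Fin n → ℝ),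
    (∀ i m, 0 ≤ a i m) → (∀ i, HasSum (a i) (s i)) →
    HasSum (fun f : Fin n → ℕ => ∏ i, a i (f i)) (∏ i, s i) := by
  intro n
  induction n with
  | zero =>
      intro a s _ _
      simp only [Finset.univ_eq_empty, Finset.prod_empty]
      have h0 : ∀ (b' : Fin 0 → ℕ), b' ≠ (fun _ => 0) → (fun _ : Fin 0 → ℕ => (1:ℝ)) b' = 0 := by
        intro b' hb'; exact absurd (funext fun i => i.elim0) hb'
      simpa using hasSum_single (f := fun _ : Fin 0 → ℕ => (1:ℝ)) (fun _ => 0) h0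
  | succ n ih =>
      intro a s hpos h
      have htail := ih (fun i => a i.succ) (fun i => s i.succ)
        (fun i m => hpos _ _) (fun i => h i.succ)
      have hs : Summable fun p : ℕ × (Fin n → ℕ) => a 0 p.1 * ∏ i, a i.succ (p.2 i) := by
        apply Summable.mul_of_nonneg (h 0).summable htail.summable
        · exact fun m => hpos 0 m
        · exact fun f => Finset.prod_nonneg fun i _ => hpos _ _
      have hmul := (h 0).mul htail hs
      rw [Fin.prod_univ_succ]
      refine ((Fin.consEquiv (fun _ : Fin (n+1) => ℕ)).hasSum_iff).1 ?_
      refine hmul.congr_fun fun p => ?_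
      simp only [Function.comp_apply, Fin.consEquiv_apply]
      rw [Fin.prod_univ_succ]
      simp

lemma gauss_fin (k : ℕ) : (∑ j : Fin k, ((j.1 : ℝ) + 1)) = k * (k + 1) / 2 := by
  induction k with
  | zero => simp
  | succ n ih =>
      rw [Fin.sum_univ_castSucc]
      simp only [Fin.coe_castSucc, Fin.val_last]
      rw [ih]; push_cast; ring

/-- The mean of the Poisson distribution of order `k` is
`μ(k,λ) = Σ_{m=0}^∞ m·P_m(k,λ) = k(k+1)λ/2`. -/
theorem poissonK_mean (k : ℕ) (hk : 1 ≤ k) (lam : ℝ) (hlam : 0 < lam) :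
    HasSum (fun m : ℕ => (m : ℝ) * poissonK k lam m) (k * (k + 1) * lam / 2) := by
  classical
  set w : (Fin k → ℕ) → ℕ := fun f => ∑ j : Fin k, (j.1 + 1) * f j with hw
  set G : (Fin k → ℕ) → ℝ := fun f =>
    Real.exp (-(k * lam)) * ((w f : ℝ) * ∏ j, lam ^ f j / (Nat.factorial (f j) : ℝ)) with hG
  -- the per-coordinate families
  set a : Fin k → Fin k → ℕ → ℝ := fun j i m =>
    (if i = j then (m : ℝ) else 1) * (lam ^ m / (Nat.factorial m : ℝ)) with ha
  have hanonneg : ∀ j i m, 0 ≤ a j i m := by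
    intro j i m
    apply mul_nonneg
    · split <;> positivity
    · positivity
  have haSum : ∀ j i : Fin k, HasSum (a j i)
      ((if i = j then lam else 1) * Real.exp lam) := by
    intro j i
    by_cases hij : i = j
    · simpa [ha, hij] using hasSum_mul_exp_div lam
    · simpa [ha, hij] using hasSum_exp_div lam
  have hprodSum : ∀ j : Fin k,
      HasSum (fun f : Fin k → ℕ => ∏ i, a j i (f i)) (lam * Real.exp lam ^ k) := by
    intro j
    have := hasSum_pi_prod (a j) (fun i => (if i = j then lam else 1) * Real.exp lam)
      (hanonneg j) (haSum j)
    have hval : (∏ i : Fin k, (if i = j then lam else 1) * Real.exp lam)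
        = lam * Real.exp lam ^ k := by
      rw [Finset.prod_mul_distrib, Finset.prod_ite_eq' Finset.univ j (fun _ => lam)]
      simp
    rwa [hval] at this
  -- HasSum of G
  have hGsum : HasSum G (k * (k + 1) * lam / 2) := by
    have hj : ∀ j : Fin k, HasSum
        (fun f : Fin k → ℕ => ((j.1 : ℝ) + 1) * Real.exp (-(k * lam)) * ∏ i, a j i (f i))
        (((j.1 : ℝ) + 1) * lam) := by
      intro j
      have h := ((hprodSum j).mul_left (((j.1 : ℝ) + 1) * Real.exp (-(k * lam))))
      have : ((j.1 : ℝ) + 1) * Real.exp (-(k * lam)) * (lam * Real.exp lam ^ k)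
          = ((j.1 : ℝ) + 1) * lam := by
        rw [← Real.exp_nat_mul]
        have hexp : Real.exp (-((k : ℝ) * lam)) * Real.exp ((k : ℝ) * lam) = 1 := by
          rw [← Real.exp_add]; simp
        linear_combination ((j.1 : ℝ) + 1) * lam * hexp
      rwa [this] at h
    have hsum := hasSum_sum (f := fun (j : Fin k) (f : Fin k → ℕ) =>
      ((j.1 : ℝ) + 1) * Real.exp (-(k * lam)) * ∏ i, a j i (f i))
      (s := Finset.univ) (a := fun j => ((j.1 : ℝ) + 1) * lam) (fun j _ => hj j)
    have hval : (∑ j : Fin k, ((j.1 : ℝ) + 1) * lam) = k * (k + 1) * lam / 2 := by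
      rw [← Finset.sum_mul, gauss_fin]; ring
    rw [hval] at hsum
    refine hsum.congr_fun fun f => ?_
    -- G f = ∑ j, (j+1) * exp(-kλ) * ∏ a j i (f i)
    have hprodeq : ∀ j : Fin k, (∏ i, a j i (f i))
        = (f j : ℝ) * ∏ i, lam ^ f i / (Nat.factorial (f i) : ℝ) := by
      intro j
      rw [ha]
      simp only
      rw [Finset.prod_mul_distrib, Finset.prod_ite_eq' Finset.univ j (fun i => ((f i : ℕ) : ℝ))]
      simp
    simp only [hG, hprodeq]
    rw [hw]
    push_cast
    rw [Finset.sum_mul, Finset.mul_sum]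
    refine Finset.sum_congr rfl fun j _ => ?_
    ring
  -- fiberwise
  have hfib := hGsum.tsum_fiberwise w
  refine hfib.congr_fun fun m => ?_
  -- identify the fiber with the finset
  have hset : (w ⁻¹' {m} : Set (Fin k → ℕ)) =
      ↑(Finset.filter (fun f : Fin k → ℕ => ∑ j : Fin k, (j.1 + 1) * f j = m)
          (Fintype.piFinset fun _ : Fin k => Finset.range (m + 1))) := by
    ext f
    simp only [Set.mem_preimage, Set.mem_singleton_iff, Finset.coe_filter, Set.mem_setOf_eq,
      Fintype.mem_piFinset, Finset.mem_range, Nat.lt_succ_iff, hw]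
    constructor
    · intro hf
      refine ⟨fun j => ?_, hf⟩
      calc f j ≤ (j.1 + 1) * f j := Nat.le_mul_of_pos_left _ (Nat.succ_pos _)
        _ ≤ ∑ i : Fin k, (i.1 + 1) * f i :=
          Finset.single_le_sum (f := fun i : Fin k => (i.1 + 1) * f i)
            (fun i _ => Nat.zero_le _) (Finset.mem_univ j)
        _ = m := hf
    · exact fun hf => hf.2
  rw [hset, Finset.tsum_subtype']
  rw [poissonK, Finset.mul_sum, Finset.mul_sum]
  refine Finset.sum_congr rfl fun f hf => ?_
  have hfm : w f = m := (Finset.mem_filter.1 hf).2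
  rw [hG]
  simp only [hfm]
  ring
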